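/- Let n ≥ 1 and let A_1, …, A_n be symmetric real m×m matrices, with associated quadratic forms P_i(x) = ⟨x, A_i x⟩ on ℝ^m. Then the following are equivalent: (i) ⟨∇P_i(x), ∇P_j(x)⟩ = 4·δ_{ij}·⟨x, A_1² x⟩ for all x ∈ ℝ^m and all i, j ∈ {1,…,n} (i.e. the polynomial map P = (P_1,…,P_n) : ℝ^m → ℝ^n is weakly horizontally conformal); (ii) A_i A_j + A_j A_i = 2 δ_{ij} A_1² for all i, j ∈ {1,…,n}. -/

import Mathlib

open RealInnerProductSpace
open Matrix

/-- The quadratic form `P(x) = ⟨x, A x⟩` associated to an `m × m` real matrix `A`,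
viewed as a function on Euclidean space `ℝ^m`. -/
noncomputable def quadForm {m : ℕ} (A : Matrix (Fin m) (Fin m) ℝ)
    (x : EuclideanSpace ℝ (Fin m)) : ℝ :=
  ⟪x, Matrix.toEuclideanLin A x⟫

lemma isSymmetric_of_isSymm {m : ℕ} {A : Matrix (Fin m) (Fin m) ℝ} (h : A.IsSymm) :
    (Matrix.toEuclideanLin A).IsSymmetric := by
  rw [← Matrix.isHermitian_iff_isSymmetric]
  rwa [Matrix.IsHermitian, Matrix.conjTranspose_eq_transpose_of_trivial]

lemma toEuclideanLin_mul {m : ℕ} (A B : Matrix (Fin m) (Fin m) ℝ)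
    (x : EuclideanSpace ℝ (Fin m)) :
    Matrix.toEuclideanLin (A * B) x = Matrix.toEuclideanLin A (Matrix.toEuclideanLin B x) := by
  simp [Matrix.toEuclideanLin_apply, Matrix.mulVec_mulVec]

lemma gradient_quadForm {m : ℕ} {A : Matrix (Fin m) (Fin m) ℝ} (h : A.IsSymm)
    (x : EuclideanSpace ℝ (Fin m)) :
    gradient (quadForm A) x = (2 : ℝ) • Matrix.toEuclideanLin A x := by
  set L := Matrix.toEuclideanLin A
  have hL := isSymmetric_of_isSymm h
  have hLc : HasFDerivAt (fun y : EuclideanSpace ℝ (Fin m) => L y)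
      (LinearMap.toContinuousLinearMap L) x :=
    (LinearMap.toContinuousLinearMap L).hasFDerivAt
  have hid : HasFDerivAt (fun y : EuclideanSpace ℝ (Fin m) => y)
      (ContinuousLinearMap.id ℝ _) x := hasFDerivAt_id x
  have hD := hid.inner ℝ hLc
  have : HasGradientAt (quadForm A) ((2 : ℝ) • L x) x := by
    rw [hasGradientAt_iff_hasFDerivAt]
    convert hD using 1
    · rfl
    · rfl
    ext v
    simp only [InnerProductSpace.toDual_apply_apply, ContinuousLinearMap.comp_apply,
      ContinuousLinearMap.prod_apply, fderivInnerCLM_apply, ContinuousLinearMap.id_apply,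
      LinearMap.coe_toContinuousLinearMap']
    rw [real_inner_smul_left, ← hL x v, real_inner_comm]
    ring
  exact this.gradient

/-- For symmetric real `m × m` matrices `A_1, …, A_n` (`n ≥ 1`) with
associated quadratic forms `P_i(x) = ⟨x, A_i x⟩`, the map `P = (P_1, …, P_n) : ℝ^m → ℝ^n`
is weakly horizontally conformal, i.e.
`⟨∇P_i(x), ∇P_j(x)⟩ = 4 δ_{ij} ⟨x, A_1² x⟩` for all `x, i, j`,
if and only if `A_i A_j + A_j A_i = 2 δ_{ij} A_1²` for all `i, j`. -/
theorem whc_iff_clifford_relations {m n : ℕ} (hn : 1 ≤ n)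
    (A : Fin n → Matrix (Fin m) (Fin m) ℝ) (hsymm : ∀ i, (A i).IsSymm) :
    (∀ (x : EuclideanSpace ℝ (Fin m)) (i j : Fin n),
        ⟪gradient (quadForm (A i)) x, gradient (quadForm (A j)) x⟫
          = 4 * (if i = j then 1 else 0)
              * ⟪x, Matrix.toEuclideanLin (A ⟨0, hn⟩ * A ⟨0, hn⟩) x⟫)
      ↔ (∀ i j : Fin n,
          A i * A j + A j * A i
            = (if i = j then (2 : ℝ) else 0) • (A ⟨0, hn⟩ * A ⟨0, hn⟩)) := by
  set A0 := A ⟨0, hn⟩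
  -- key computation: the inner product of gradients
  have key : ∀ (x : EuclideanSpace ℝ (Fin m)) (i j : Fin n),
      ⟪gradient (quadForm (A i)) x, gradient (quadForm (A j)) x⟫
        = 2 * ⟪x, Matrix.toEuclideanLin (A i * A j + A j * A i) x⟫ := by
    intro x i j
    rw [gradient_quadForm (hsymm i), gradient_quadForm (hsymm j),
      real_inner_smul_left, real_inner_smul_right]
    have h1 : ⟪Matrix.toEuclideanLin (A i) x, Matrix.toEuclideanLin (A j) x⟫
        = ⟪x, Matrix.toEuclideanLin (A i) (Matrix.toEuclideanLin (A j) x)⟫ :=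
      (isSymmetric_of_isSymm (hsymm i) x _)
    have h2 : ⟪Matrix.toEuclideanLin (A i) x, Matrix.toEuclideanLin (A j) x⟫
        = ⟪x, Matrix.toEuclideanLin (A j) (Matrix.toEuclideanLin (A i) x)⟫ := by
      rw [real_inner_comm]
      exact isSymmetric_of_isSymm (hsymm j) x _
    have : Matrix.toEuclideanLin (A i * A j + A j * A i) x
        = Matrix.toEuclideanLin (A i) (Matrix.toEuclideanLin (A j) x)
          + Matrix.toEuclideanLin (A j) (Matrix.toEuclideanLin (A i) x) := by
      rw [map_add, LinearMap.add_apply, toEuclideanLin_mul, toEuclideanLin_mul]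
    rw [this, inner_add_right, ← h1, ← h2]
    ring
  constructor
  · intro H i j
    -- the matrix S is symmetric and its quadratic form vanishes
    set c : ℝ := if i = j then (2 : ℝ) else 0 with hc
    set S := A i * A j + A j * A i - c • (A0 * A0) with hS
    have hSsymm : S.IsSymm := by
      have hij : (A i * A j)ᵀ = A j * A i := by
        rw [Matrix.transpose_mul, (hsymm i).eq, (hsymm j).eq]
      have hji : (A j * A i)ᵀ = A i * A j := by
        rw [Matrix.transpose_mul, (hsymm i).eq, (hsymm j).eq]
      have h00 : (A0 * A0)ᵀ = A0 * A0 := by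
        rw [Matrix.transpose_mul, (hsymm ⟨0, hn⟩).eq]
      unfold Matrix.IsSymm
      rw [hS, Matrix.transpose_sub, Matrix.transpose_add, hij, hji, Matrix.transpose_smul, h00]
      abel
    have hzero : ∀ x, ⟪Matrix.toEuclideanLin S x, x⟫ = 0 := by
      intro x
      have hkey := key x i j
      rw [H x i j] at hkey
      rw [hS, map_sub, _root_.map_smul, LinearMap.sub_apply, LinearMap.smul_apply,
        inner_sub_left, real_inner_smul_left]
      have hq : ⟪Matrix.toEuclideanLin (A i * A j + A j * A i) x, x⟫
          = c * ⟪Matrix.toEuclideanLin (A0 * A0) x, x⟫ := by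
        have h0 : ⟪Matrix.toEuclideanLin (A i * A j + A j * A i) x, x⟫
            = ⟪x, Matrix.toEuclideanLin (A i * A j + A j * A i) x⟫ := real_inner_comm _ _
        have h0' : ⟪Matrix.toEuclideanLin (A0 * A0) x, x⟫
            = ⟪x, Matrix.toEuclideanLin (A0 * A0) x⟫ := real_inner_comm _ _
        rw [h0, h0']
        by_cases hij : i = j <;> simp only [hc, hij, if_true, if_false] at hkey ⊢ <;> linarith
      rw [hq]; ring
    have : Matrix.toEuclideanLin S = 0 :=
      ((isSymmetric_of_isSymm hSsymm).inner_map_self_eq_zero).mp hzero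
    have hS0 : S = 0 := by
      have := Matrix.toEuclideanLin.injective (by rw [this, map_zero] : Matrix.toEuclideanLin S
        = Matrix.toEuclideanLin 0)
      exact this
    have := sub_eq_zero.mp (hS ▸ hS0)
    exact this
  · intro H x i j
    rw [key x i j, H i j, _root_.map_smul, LinearMap.smul_apply, real_inner_smul_right]
    by_cases hij : i = j <;> simp [hij] <;> ring
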